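/- The number of closed walks of length $d(m-1)$ on vertex set $[n]$ whose arc multiset $E$ satisfies: $|E| = d(m-1)$, $E$ is balanced, and every outdegree is a multiple of $m-1$, equals $\sum_{d_1+\cdots+d_n = d} \frac{(d(m-1))!}{\prod_{i=1}^n (d_i(m-1))!}$, where the sum is over all tuples of nonnegative integers summing to $d$, counting each closed walk as a cyclic sequence with a marked starting vertex (i.e., as a vertex sequence $v_0, v_1, \dots, v_{d(m-1)}$ with $v_{d(m-1)} = v_0$). -/

import Mathlib

/-- Outdegree of vertex `i` in a multiset of arcs. -/
def outdeg {n : ℕ} (E : Multiset (Fin n × Fin n)) (i : Fin n) : ℕ :=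
  (E.filter (fun e => e.1 = i)).card

/-- Indegree of vertex `i` in a multiset of arcs. -/
def indeg {n : ℕ} (E : Multiset (Fin n × Fin n)) (i : Fin n) : ℕ :=
  (E.filter (fun e => e.2 = i)).card

/-- The arc multiset of a closed walk `v 0, v 1, …, v (L-1), v 0`. -/
def cyclicArcs {n L : ℕ} (v : Fin L → Fin n) : Multiset (Fin n × Fin n) :=
  (Finset.univ : Finset (Fin L)).val.map
    (fun t => (v t, v ⟨((t : ℕ) + 1) % L, Nat.mod_lt _ t.pos⟩))

/-- Number of times `v` takes value `i`. -/
def cnt {n L : ℕ} (v : Fin L → Fin n) (i : Fin n) : ℕ :=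
  (Finset.univ.filter (fun t => v t = i)).card

lemma cnt_snoc {n L : ℕ} (u : Fin L → Fin n) (a i : Fin n) :
    cnt (Fin.snoc u a) i = cnt u i + if a = i then 1 else 0 := by
  simp only [cnt, Finset.card_filter, Fin.sum_univ_castSucc, Fin.snoc_castSucc, Fin.snoc_last]

lemma sum_cnt {n L : ℕ} (v : Fin L → Fin n) : ∑ i, cnt v i = L := by
  have := Finset.card_eq_sum_card_fiberwise (f := v) (s := Finset.univ) (t := Finset.univ)
    (fun x _ => Finset.mem_univ _)
  simpa [cnt] using this.symm

lemma core_count (n : ℕ) : ∀ (L : ℕ) (k : Fin n → ℕ), (∑ i, k i) = L →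
    ((Finset.univ.filter (fun v : Fin L → Fin n => ∀ i, cnt v i = k i)).card : ℚ)
      = (Nat.factorial L : ℚ) / ∏ i, (Nat.factorial (k i) : ℚ) := by
  intro L
  induction L with
  | zero =>
    intro k hk
    have hk0 : ∀ i, k i = 0 := by
      intro i
      exact Finset.sum_eq_zero_iff.mp hk i (Finset.mem_univ i)
    have : ∀ v : Fin 0 → Fin n, ∀ i, cnt v i = k i := by
      intro v i; simp [cnt, hk0 i]
    rw [Finset.filter_true_of_mem (fun v _ => this v)]
    simp [hk0]
  | succ L ih =>
    intro k hk
    classical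
    rw [Finset.card_eq_sum_card_fiberwise (f := fun v => v (Fin.last L)) (t := Finset.univ)
      (fun x _ => Finset.mem_univ _)]
    push_cast
    have key : ∀ a : Fin n,
        ((Finset.filter (fun v => v (Fin.last L) = a)
          (Finset.filter (fun v : Fin (L+1) → Fin n => ∀ i, cnt v i = k i) Finset.univ)).card : ℚ)
        = (k a : ℚ) * ((Nat.factorial L : ℚ) / ∏ i, (Nat.factorial (k i) : ℚ)) := by
      intro a
      by_cases ha : k a = 0
      · have : (Finset.filter (fun v => v (Fin.last L) = a)
            (Finset.filter (fun v : Fin (L+1) → Fin n => ∀ i, cnt v i = k i) Finset.univ)) = ∅ := by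
          apply Finset.eq_empty_of_forall_notMem
          intro v hv
          simp only [Finset.mem_filter, Finset.mem_univ, true_and] at hv
          obtain ⟨h1, h2⟩ := hv
          have hmem : Fin.last L ∈ Finset.univ.filter (fun t => v t = a) := by simp [h2]
          have hpos : 0 < cnt v a := Finset.card_pos.mpr ⟨_, hmem⟩
          rw [h1 a, ha] at hpos; exact absurd hpos (by simp)
        rw [this]; simp [ha]
      · have hpos : 0 < k a := Nat.pos_of_ne_zero ha
        set k' : Fin n → ℕ := Function.update k a (k a - 1) with hk'
        have hcard : (Finset.filter (fun v => v (Fin.last L) = a)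
            (Finset.filter (fun v : Fin (L+1) → Fin n => ∀ i, cnt v i = k i) Finset.univ)).card
            = (Finset.univ.filter (fun u : Fin L → Fin n => ∀ i, cnt u i = k' i)).card := by
          apply Finset.card_nbij' (fun v => Fin.init v) (fun u => Fin.snoc u a)
          · intro v hv
            simp only [Finset.mem_coe, Finset.mem_filter, Finset.mem_univ, true_and] at hv ⊢
            obtain ⟨h1, h2⟩ := hv
            intro i
            have hv' : v = Fin.snoc (Fin.init v) (v (Fin.last L)) := (Fin.snoc_init_self v).symm
            have hthis := h1 i
            rw [hv', cnt_snoc, h2] at hthis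
            rw [hk']
            by_cases hia : a = i
            · subst hia
              rw [Function.update_self]
              simp at hthis
              omega
            · rw [Function.update_of_ne (Ne.symm hia)]
              rw [if_neg hia] at hthis
              omega
          · intro u hu
            simp only [Finset.mem_coe, Finset.mem_filter, Finset.mem_univ, true_and] at hu ⊢
            constructor
            · intro i
              rw [cnt_snoc, hu i, hk']
              by_cases hia : a = i
              · subst hia; rw [Function.update_self]; simp; omega
              · rw [Function.update_of_ne (Ne.symm hia), if_neg hia]
                omega
            · simp
          · intro v hv
            simp only [Finset.mem_coe, Finset.mem_filter, Finset.mem_univ, true_and] at hv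
            rw [← hv.2]
            exact Fin.snoc_init_self v
          · intro u _
            simp
        rw [hcard]
        have hsum' : ∑ i, k' i = L := by
          have hEq : ∑ x ∈ Finset.univ.erase a, k' x = ∑ x ∈ Finset.univ.erase a, k x :=
            Finset.sum_congr rfl (fun x hx => by
              rw [hk', Function.update_of_ne (Finset.ne_of_mem_erase hx)])
          have ha' : k' a = k a - 1 := by rw [hk']; exact Function.update_self _ _ _
          have h2 := Finset.add_sum_erase _ k (Finset.mem_univ a)
          have h3 := Finset.add_sum_erase _ k' (Finset.mem_univ a)
          clear hcard
          omega
        rw [ih k' hsum']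
        have hprod : (∏ i, (Nat.factorial (k i) : ℚ))
            = (k a : ℚ) * ∏ i, (Nat.factorial (k' i) : ℚ) := by
          have e1 : ∏ i, (Nat.factorial (k i) : ℚ)
              = (Nat.factorial (k a) : ℚ) * ∏ x ∈ Finset.univ.erase a, (Nat.factorial (k x) : ℚ) :=
            (Finset.mul_prod_erase _ _ (Finset.mem_univ a)).symm
          have e2 : ∏ i, (Nat.factorial (k' i) : ℚ)
              = (Nat.factorial (k' a) : ℚ) * ∏ x ∈ Finset.univ.erase a, (Nat.factorial (k' x) : ℚ) :=
            (Finset.mul_prod_erase _ _ (Finset.mem_univ a)).symm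
          have e3 : ∀ x ∈ Finset.univ.erase a, (Nat.factorial (k' x) : ℚ) = (Nat.factorial (k x) : ℚ) := by
            intro x hx
            rw [hk', Function.update_of_ne (Finset.ne_of_mem_erase hx)]
          rw [e1, e2, Finset.prod_congr rfl e3]
          have e4 : (k a : ℚ) * (Nat.factorial (k' a) : ℚ) = (Nat.factorial (k a) : ℚ) := by
            rw [hk', Function.update_self, ← Nat.cast_mul, Nat.mul_factorial_pred ha]
          rw [← e4]; ring
        rw [hprod]
        have hne : (∏ i, (Nat.factorial (k' i) : ℚ)) ≠ 0 :=
          Finset.prod_ne_zero_iff.mpr (fun i _ => Nat.cast_ne_zero.mpr (Nat.factorial_ne_zero _))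
        have hka : (k a : ℚ) ≠ 0 := Nat.cast_ne_zero.mpr ha
        field_simp
    rw [Finset.sum_congr rfl (fun a _ => key a)]
    rw [← Finset.sum_mul]
    have hs : (∑ a, (k a : ℚ)) = ((L : ℚ) + 1) := by
      rw [← Nat.cast_sum, hk]; push_cast; ring
    rw [hs, Nat.factorial_succ]
    push_cast
    have hne : (∏ i, (Nat.factorial (k i) : ℚ)) ≠ 0 :=
      Finset.prod_ne_zero_iff.mpr (fun i _ => Nat.cast_ne_zero.mpr (Nat.factorial_ne_zero _))
    field_simp

lemma outdeg_cyclicArcs {n L : ℕ} (v : Fin L → Fin n) (i : Fin n) :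
    outdeg (cyclicArcs v) i = cnt v i := by
  classical
  simp only [outdeg, cyclicArcs, Multiset.filter_map, Multiset.card_map, Function.comp]
  rfl

lemma indeg_cyclicArcs {n L : ℕ} (v : Fin L → Fin n) (i : Fin n) :
    indeg (cyclicArcs v) i = cnt v i := by
  classical
  simp only [indeg, cyclicArcs, Multiset.filter_map, Multiset.card_map, Function.comp]
  show (Finset.univ.filter (fun t : Fin L => v ⟨((t : ℕ) + 1) % L, Nat.mod_lt _ t.pos⟩ = i)).card
    = cnt v i
  rcases Nat.eq_zero_or_pos L with hL | hL
  · subst hL; simp [cnt]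
  haveI : NeZero L := ⟨Nat.pos_iff_ne_zero.mp hL⟩
  have hfn : ∀ t : Fin L, (⟨((t : ℕ) + 1) % L, Nat.mod_lt _ t.pos⟩ : Fin L) = t + 1 := by
    intro t
    apply Fin.ext
    rw [Fin.add_def]
    simp [Fin.val_one', Nat.add_mod_mod]
  simp only [hfn, cnt]
  apply Finset.card_nbij' (fun t => t + 1) (fun t => t - 1)
  · intro t ht; simp at ht ⊢; exact ht
  · intro t ht; simp at ht ⊢; simpa [sub_add_cancel] using ht
  · intro t _; simp
  · intro t _; simp

open Classical in
theorem stmt9 (n m d : ℕ) (hm : 2 ≤ m) (hd : 1 ≤ d) (hn : 1 ≤ n) :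
    ((Finset.univ.filter (fun v : Fin (d * (m - 1)) → Fin n =>
        (∀ i, outdeg (cyclicArcs v) i = indeg (cyclicArcs v) i) ∧
        (∀ i, (m - 1) ∣ outdeg (cyclicArcs v) i))).card : ℚ) =
      ∑ c ∈ Finset.Nat.antidiagonalTuple n d,
        (Nat.factorial (d * (m - 1)) : ℚ) /
          ∏ i : Fin n, (Nat.factorial (c i * (m - 1)) : ℚ) := by
  have hm1 : 0 < m - 1 := by omega
  set L := d * (m - 1) with hLdef
  have step1 : (Finset.univ.filter (fun v : Fin L → Fin n =>
        (∀ i, outdeg (cyclicArcs v) i = indeg (cyclicArcs v) i) ∧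
        (∀ i, (m - 1) ∣ outdeg (cyclicArcs v) i)))
      = Finset.univ.filter (fun v : Fin L → Fin n => ∀ i, (m - 1) ∣ cnt v i) := by
    apply Finset.filter_congr
    intro v _
    simp [outdeg_cyclicArcs, indeg_cyclicArcs]
  rw [step1]
  have hmaps : ∀ v ∈ Finset.univ.filter (fun v : Fin L → Fin n => ∀ i, (m - 1) ∣ cnt v i),
      (fun i => cnt v i / (m - 1)) ∈ Finset.Nat.antidiagonalTuple n d := by
    intro v hv
    simp only [Finset.mem_filter, Finset.mem_univ, true_and] at hv
    rw [Finset.Nat.mem_antidiagonalTuple]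
    have h1 : ∑ i, cnt v i = L := sum_cnt v
    have h2 : ∑ i, cnt v i = ∑ i, (m - 1) * (cnt v i / (m - 1)) :=
      Finset.sum_congr rfl (fun i _ => (Nat.mul_div_cancel' (hv i)).symm)
    rw [← Finset.mul_sum] at h2
    have : (m - 1) * (∑ i, cnt v i / (m - 1)) = (m - 1) * d := by
      rw [← h2, h1, hLdef]; ring
    exact Nat.eq_of_mul_eq_mul_left hm1 this
  rw [Finset.card_eq_sum_card_fiberwise hmaps]
  push_cast
  refine Finset.sum_congr rfl (fun c hc => ?_)
  have hfib : (Finset.filter (fun v => (fun i => cnt v i / (m - 1)) = c)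
        (Finset.univ.filter (fun v : Fin L → Fin n => ∀ i, (m - 1) ∣ cnt v i)))
      = Finset.univ.filter (fun v : Fin L → Fin n => ∀ i, cnt v i = c i * (m - 1)) := by
    rw [Finset.filter_filter]
    apply Finset.filter_congr
    intro v _
    constructor
    · rintro ⟨hdvd, heq⟩ i
      have := congrFun heq i
      rw [← this, Nat.div_mul_cancel (hdvd i)]
    · intro h
      refine ⟨fun i => ⟨c i, by rw [h i]; ring⟩, ?_⟩
      funext i
      rw [h i, Nat.mul_div_cancel _ hm1]
  rw [hfib]
  have hsum : ∑ i, c i * (m - 1) = L := by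
    rw [← Finset.sum_mul, Finset.Nat.mem_antidiagonalTuple.mp hc, hLdef]
  rw [core_count n L _ hsum]
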